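/- The r-deranged Bell numbers B^r_n defined by B^r_n = sum_{i=0}^{n} d_{i,r} * S(n+r, i+r)_r have exponential generating function sum_{n=0}^∞ B^r_n t^n/n! = e^{rt} (e^t - 1)^r e^{-(e^t - 1)} / (2 - e^t)^{r+1}, as formal power series over ℚ. -/

import Mathlib

open Nat Finset PowerSeries

lemma aux_vanish (A : PowerSeries ℚ) (k b : ℕ) (h : b < k) :
    PowerSeries.coeff b (A * (exp ℚ - 1) ^ k) = 0 := by
  have hdvd : (X : PowerSeries ℚ) ^ k ∣ A * (exp ℚ - 1) ^ k :=
    Dvd.dvd.mul_left (pow_dvd_pow_of_dvd (X_dvd_iff.mpr (by simp)) k) A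
  obtain ⟨g, hg⟩ := hdvd
  rw [hg, coeff_mul]
  apply Finset.sum_eq_zero
  intro p hp
  have hp1 : p.1 ≤ b := by
    have := Finset.HasAntidiagonal.mem_antidiagonal.mp hp
    omega
  rw [coeff_X_pow, if_neg (by omega), zero_mul]

noncomputable def Phi (r : ℕ) (G : PowerSeries ℚ) : PowerSeries ℚ :=
  PowerSeries.mk fun n => ∑ k ∈ Finset.range (n + 1),
    PowerSeries.coeff k G *
      PowerSeries.coeff n (rescale (r : ℚ) (exp ℚ) * (exp ℚ - 1) ^ k)

lemma coeff_Phi (r : ℕ) (G : PowerSeries ℚ) (n : ℕ) :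
    PowerSeries.coeff n (Phi r G) = ∑ k ∈ Finset.range (n + 1),
      PowerSeries.coeff k G *
        PowerSeries.coeff n (rescale (r : ℚ) (exp ℚ) * (exp ℚ - 1) ^ k) := by
  simp [Phi, coeff_mk]

lemma coeff_mul_Phi (r : ℕ) (A G : PowerSeries ℚ) (n : ℕ) :
    PowerSeries.coeff n (A * Phi r G) = ∑ k ∈ Finset.range (n + 1),
      PowerSeries.coeff k G *
        PowerSeries.coeff n (A * (rescale (r : ℚ) (exp ℚ) * (exp ℚ - 1) ^ k)) := by
  rw [coeff_mul]
  have h1 : ∀ p ∈ antidiagonal n, PowerSeries.coeff p.1 A * PowerSeries.coeff p.2 (Phi r G)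
      = ∑ k ∈ Finset.range (n + 1), PowerSeries.coeff k G *
          (PowerSeries.coeff p.1 A *
            PowerSeries.coeff p.2 (rescale (r : ℚ) (exp ℚ) * (exp ℚ - 1) ^ k)) := by
    intro p hp
    have hp2 : p.2 ≤ n := by
      have := Finset.HasAntidiagonal.mem_antidiagonal.mp hp; omega
    rw [coeff_Phi, Finset.mul_sum]
    rw [← Finset.sum_subset (Finset.range_subset_range.mpr (by omega : p.2 + 1 ≤ n + 1))]
    · exact Finset.sum_congr rfl fun k _ => by ring
    · intro k _ hk
      have : p.2 < k := by simp at hk; omega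
      rw [aux_vanish _ _ _ this, mul_zero, mul_zero]
  rw [Finset.sum_congr rfl h1, Finset.sum_comm]
  refine Finset.sum_congr rfl fun k _ => ?_
  rw [← Finset.mul_sum, coeff_mul]

lemma Phi_sub (r : ℕ) (G H : PowerSeries ℚ) : Phi r (G - H) = Phi r G - Phi r H := by
  ext n
  simp only [map_sub, coeff_Phi, sub_mul, Finset.sum_sub_distrib]

lemma Phi_neg (r : ℕ) (G : PowerSeries ℚ) : Phi r (-G) = - Phi r G := by
  have := Phi_sub r 0 G
  simpa [show Phi r 0 = 0 by ext n; simp [coeff_Phi]] using this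

lemma Phi_X_mul (r : ℕ) (G : PowerSeries ℚ) :
    Phi r (X * G) = (exp ℚ - 1) * Phi r G := by
  ext n
  rw [coeff_Phi, coeff_mul_Phi]
  rw [Finset.sum_range_succ' (fun k => PowerSeries.coeff k (X * G) *
      PowerSeries.coeff n (rescale (r : ℚ) (exp ℚ) * (exp ℚ - 1) ^ k))]
  rw [Finset.sum_range_succ (fun k => PowerSeries.coeff k G *
      PowerSeries.coeff n ((exp ℚ - 1) * (rescale (r : ℚ) (exp ℚ) * (exp ℚ - 1) ^ k)))]
  have hlast : PowerSeries.coeff n ((exp ℚ - 1) * (rescale (r : ℚ) (exp ℚ) * (exp ℚ - 1) ^ n))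
      = 0 := by
    rw [show (exp ℚ - 1) * (rescale (r : ℚ) (exp ℚ) * (exp ℚ - 1) ^ n)
        = rescale (r : ℚ) (exp ℚ) * (exp ℚ - 1) ^ (n + 1) by ring]
    exact aux_vanish _ _ _ (by omega)
  rw [hlast, mul_zero, add_zero]
  have h0 : PowerSeries.coeff 0 (X * G) = 0 := by simp
  rw [h0, zero_mul, add_zero]
  refine Finset.sum_congr rfl fun k _ => ?_
  rw [coeff_succ_X_mul]
  congr 1
  congr 1
  ring

lemma Phi_X_pow_mul (r m : ℕ) (G : PowerSeries ℚ) :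
    Phi r (X ^ m * G) = (exp ℚ - 1) ^ m * Phi r G := by
  induction m with
  | zero => simp
  | succ m ih =>
    rw [show (X : PowerSeries ℚ) ^ (m + 1) * G = X * (X ^ m * G) by ring, Phi_X_mul, ih]
    ring

lemma Phi_mul_one_sub_X_pow (r m : ℕ) (G : PowerSeries ℚ) :
    Phi r (G * (1 - X) ^ m) = Phi r G * (2 - exp ℚ) ^ m := by
  induction m with
  | zero => simp
  | succ m ih =>
    have : G * (1 - X) ^ (m + 1) = G * (1 - X) ^ m - X * (G * (1 - X) ^ m) := by ring
    rw [this, Phi_sub, Phi_X_mul, ih]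
    ring

lemma psderiv_mul (f g : PowerSeries ℚ) :
    d⁄dX ℚ (f * g) = f * d⁄dX ℚ g + g * d⁄dX ℚ f := by
  simp [smul_eq_mul, Derivation.leibniz (d⁄dX ℚ) f g]

lemma deriv_rescale_exp (a : ℚ) :
    d⁄dX ℚ (rescale a (exp ℚ)) = C a * rescale a (exp ℚ) := by
  ext n
  rw [coeff_derivative, coeff_C_mul, coeff_rescale, coeff_rescale, coeff_exp, coeff_exp]
  simp only [map_div₀, map_one, map_natCast]
  rw [factorial_succ]
  push_cast
  have h1 : ((n : ℚ) + 1) ≠ 0 := by positivity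
  have h2 : ((n ! : ℚ)) ≠ 0 := by exact_mod_cast factorial_ne_zero n
  field_simp
  ring

lemma deriv_exp' : d⁄dX ℚ (exp ℚ) = exp ℚ := by
  have := deriv_rescale_exp 1
  simpa [rescale_one] using this

lemma deriv_sigma : d⁄dX ℚ (exp ℚ - 1) = exp ℚ := by
  rw [show (1 : PowerSeries ℚ) = C 1 by simp, map_sub, deriv_exp', derivative_C, sub_zero]

lemma deriv_sigma_pow (k : ℕ) :
    d⁄dX ℚ ((exp ℚ - 1) ^ (k + 1)) = C ((k : ℚ) + 1) * (exp ℚ * (exp ℚ - 1) ^ k) := by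
  have h := Derivation.leibniz_pow (d⁄dX ℚ) (exp ℚ - 1) (n := k + 1)
  rw [h, deriv_sigma, Nat.add_sub_cancel]
  simp only [smul_eq_mul, nsmul_eq_mul]
  rw [show ((k : ℚ) + 1) = ((k + 1 : ℕ) : ℚ) by push_cast; ring, map_natCast]
  ring

lemma deriv_F_sigma (r : ℕ) (k : ℕ) :
    d⁄dX ℚ (rescale (r : ℚ) (exp ℚ) * (exp ℚ - 1) ^ (k + 1)) =
      C (r : ℚ) * (rescale (r : ℚ) (exp ℚ) * (exp ℚ - 1) ^ (k + 1)) +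
      C ((k : ℚ) + 1) * (exp ℚ * (rescale (r : ℚ) (exp ℚ) * (exp ℚ - 1) ^ k)) := by
  rw [psderiv_mul, deriv_sigma_pow, deriv_rescale_exp]
  ring

lemma Phi_derivative (r : ℕ) (G : PowerSeries ℚ) :
    d⁄dX ℚ (Phi r G) = C (r : ℚ) * Phi r G + exp ℚ * Phi r (d⁄dX ℚ G) := by
  ext n
  have step1 : PowerSeries.coeff n (d⁄dX ℚ (Phi r G)) = ∑ k ∈ Finset.range (n + 2),
      PowerSeries.coeff k G *
        PowerSeries.coeff n (d⁄dX ℚ (rescale (r : ℚ) (exp ℚ) * (exp ℚ - 1) ^ k)) := by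
    rw [coeff_derivative, coeff_Phi, Finset.sum_mul]
    exact Finset.sum_congr rfl fun k _ => by rw [coeff_derivative]; ring
  have step2 : PowerSeries.coeff n (C (r : ℚ) * Phi r G) = ∑ k ∈ Finset.range (n + 2),
      PowerSeries.coeff k G *
        PowerSeries.coeff n (C (r : ℚ) * (rescale (r : ℚ) (exp ℚ) * (exp ℚ - 1) ^ k)) := by
    rw [coeff_C_mul, coeff_Phi, Finset.mul_sum,
      Finset.sum_range_succ (fun k => PowerSeries.coeff k G *
        PowerSeries.coeff n (C (r : ℚ) * (rescale (r : ℚ) (exp ℚ) * (exp ℚ - 1) ^ k)))]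
    rw [coeff_C_mul, aux_vanish _ _ _ (by omega : n < n + 1), mul_zero, mul_zero, add_zero]
    exact Finset.sum_congr rfl fun k _ => by rw [coeff_C_mul]; ring
  have step3 : PowerSeries.coeff n (exp ℚ * Phi r (d⁄dX ℚ G)) =
      ∑ k ∈ Finset.range (n + 2), PowerSeries.coeff k G *
        ((k : ℚ) * PowerSeries.coeff n
          (exp ℚ * (rescale (r : ℚ) (exp ℚ) * (exp ℚ - 1) ^ (k - 1)))) := by
    rw [coeff_mul_Phi,
      Finset.sum_range_succ' (fun k => PowerSeries.coeff k G *
        ((k : ℚ) * PowerSeries.coeff n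
          (exp ℚ * (rescale (r : ℚ) (exp ℚ) * (exp ℚ - 1) ^ (k - 1)))))]
    simp only [Nat.cast_zero, zero_mul, mul_zero, add_zero]
    refine Finset.sum_congr rfl fun k _ => ?_
    rw [coeff_derivative]
    simp only [Nat.add_sub_cancel]
    push_cast
    ring
  rw [map_add, step1, step2, step3, ← Finset.sum_add_distrib]
  refine Finset.sum_congr rfl fun k _ => ?_
  cases k with
  | zero =>
    simp only [pow_zero, mul_one, Nat.cast_zero, zero_mul, mul_zero, add_zero]
    rw [deriv_rescale_exp]
  | succ j =>
    rw [deriv_F_sigma, map_add]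
    simp only [Nat.add_sub_cancel, coeff_C_mul]
    push_cast
    ring

lemma ODE_unique (A P Q : PowerSeries ℚ) (h0 : constantCoeff P = constantCoeff Q)
    (hP : d⁄dX ℚ P = A * P) (hQ : d⁄dX ℚ Q = A * Q) : P = Q := by
  ext n
  induction n using Nat.strong_induction_on with
  | _ n ih =>
    match n with
    | 0 => simpa using h0
    | Nat.succ m =>
      have hPc := congrArg (PowerSeries.coeff m) hP
      have hQc := congrArg (PowerSeries.coeff m) hQ
      rw [coeff_derivative] at hPc hQc
      have hmul : PowerSeries.coeff m (A * P) = PowerSeries.coeff m (A * Q) := by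
        rw [coeff_mul, coeff_mul]
        refine Finset.sum_congr rfl fun p hp => ?_
        have hle : p.2 ≤ m := by
          have := Finset.HasAntidiagonal.mem_antidiagonal.mp hp; omega
        rw [ih p.2 (by omega)]
      have hne : ((m : ℚ) + 1) ≠ 0 := by positivity
      exact mul_right_cancel₀ hne (hPc.trans (hmul.trans hQc.symm))

/-- The `r`-deranged Bell numbers `B^r_n = ∑_{i=0}^n d_{i,r} S(n+r,i+r)_r` have
EGF `e^{rt}(e^t-1)^r e^{-(e^t-1)}/(2-e^t)^{r+1}`, as formal power series over `ℚ`.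
Here `d` are the `r`-derangement numbers given by their EGF, `S n i` is the
`r`-Stirling number `S(n+r,i+r)_r` given by its EGF, and `E = e^{-(e^t-1)}`
is characterized by `E(0) = 1` and `E' = -e^t · E`. -/
theorem stmt_3 (r : ℕ) (d : ℕ → ℚ) (S : ℕ → ℕ → ℚ) (E : PowerSeries ℚ)
    (hd : PowerSeries.mk (fun k => d k / (k ! : ℚ)) =
      X ^ r * rescale (-1 : ℚ) (exp ℚ) * ((1 - X) ^ (r + 1))⁻¹)
    (hS : ∀ k : ℕ, PowerSeries.mk (fun n => S n k / (n ! : ℚ)) =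
      rescale (r : ℚ) (exp ℚ) * (exp ℚ - 1) ^ k * (PowerSeries.C (k ! : ℚ))⁻¹)
    (hE0 : PowerSeries.constantCoeff E = 1)
    (hE : d⁄dX ℚ E = -(exp ℚ) * E) :
    PowerSeries.mk (fun n => (∑ i ∈ Finset.range (n + 1), d i * S n i) / (n ! : ℚ)) =
      rescale (r : ℚ) (exp ℚ) * (exp ℚ - 1) ^ r * E * ((2 - exp ℚ) ^ (r + 1))⁻¹ := by
  -- Step A: Phi r (rescale (-1) exp) = rescale r exp * E, via ODE uniqueness
  have hPsi : Phi r (rescale (-1 : ℚ) (exp ℚ)) = rescale (r : ℚ) (exp ℚ) * E := by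
    apply ODE_unique (C (r : ℚ) - exp ℚ)
    · have cF : PowerSeries.constantCoeff (rescale (r : ℚ) (exp ℚ)) = 1 := by
        rw [← coeff_zero_eq_constantCoeff_apply, coeff_rescale, coeff_exp]
        simp
      have l : PowerSeries.constantCoeff (Phi r (rescale (-1 : ℚ) (exp ℚ))) = 1 := by
        rw [← coeff_zero_eq_constantCoeff_apply, coeff_Phi]
        simp [coeff_rescale, coeff_exp, cF]
      rw [l, map_mul, hE0, mul_one, cF]
    · rw [Phi_derivative, deriv_rescale_exp, show C (-1 : ℚ) * rescale (-1 : ℚ) (exp ℚ) =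
        -(rescale (-1 : ℚ) (exp ℚ)) by simp, Phi_neg]
      ring
    · rw [psderiv_mul, hE, deriv_rescale_exp]
      ring
  -- Step B: clear the inverse in hd
  have hU : PowerSeries.constantCoeff ((1 - X : PowerSeries ℚ) ^ (r + 1)) ≠ 0 := by
    rw [map_pow, map_sub]
    simp
  have hd' : PowerSeries.mk (fun k => d k / (k ! : ℚ)) * (1 - X) ^ (r + 1)
      = X ^ r * rescale (-1 : ℚ) (exp ℚ) := by
    rw [hd, mul_assoc, PowerSeries.inv_mul_cancel _ hU, mul_one]
  -- Step C: apply Phi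
  have key := congrArg (Phi r) hd'
  rw [Phi_mul_one_sub_X_pow, Phi_X_pow_mul, hPsi] at key
  -- key : Phi r D * (2 - exp)^(r+1) = (exp - 1)^r * (rescale r exp * E)
  have hW : PowerSeries.constantCoeff ((2 - exp ℚ) ^ (r + 1)) ≠ 0 := by
    rw [map_pow, map_sub, constantCoeff_exp, map_ofNat]
    norm_num
  have hPhiD : Phi r (PowerSeries.mk fun k => d k / (k ! : ℚ)) =
      rescale (r : ℚ) (exp ℚ) * (exp ℚ - 1) ^ r * E * ((2 - exp ℚ) ^ (r + 1))⁻¹ := by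
    have h2 := congrArg (· * ((2 - exp ℚ) ^ (r + 1))⁻¹) key
    rw [mul_assoc, PowerSeries.mul_inv_cancel _ hW, mul_one] at h2
    rw [h2]
    ring
  rw [← hPhiD]
  ext n
  rw [coeff_mk, coeff_Phi]
  have hSk : ∀ k : ℕ, PowerSeries.coeff n (rescale (r : ℚ) (exp ℚ) * (exp ℚ - 1) ^ k)
      = S n k / (n ! : ℚ) * (k ! : ℚ) := by
    intro k
    have h := congrArg (· * PowerSeries.C (k ! : ℚ)) (hS k)
    rw [mul_assoc, PowerSeries.inv_mul_cancel _ (by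
      rw [constantCoeff_C]; exact_mod_cast factorial_ne_zero k), mul_one] at h
    rw [← h, coeff_mul_C, coeff_mk]
  rw [Finset.sum_div]
  refine Finset.sum_congr rfl fun k _ => ?_
  rw [coeff_mk, hSk]
  have h2 : ((k ! : ℚ)) ≠ 0 := by exact_mod_cast factorial_ne_zero k
  field_simp
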